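/- Let q : G → ℚ/ℤ be a quadratic function on an abelian group G, and let d_q(x) = q(x) - q(-x) be its homogeneity defect. Then for all n ∈ ℤ and x ∈ G, n²·q(x) - q(n·x) = (n(n-1)/2)·d_q(x). In particular, q is homogeneous (q(nx) = n²q(x) for all n, x) if and only if d_q = 0. -/

import Mathlib

/-- For a quadratic function `q` with homogeneity defect `d_q(x) = q x - q (-x)`,
`n² q(x) - q(nx) = (n(n-1)/2) d_q(x)`, and `q` is homogeneous iff `d_q = 0`. -/
theorem stmt1 {G : Type*} [AddCommGroup G] (q : G → AddCircle (1 : ℚ))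
    (hq : ∀ x₁ x₂ y : G,
      q (x₁ + x₂ + y) - q (x₁ + x₂) - q y =
        (q (x₁ + y) - q x₁ - q y) + (q (x₂ + y) - q x₂ - q y)) :
    (∀ (n : ℤ) (x : G), (n ^ 2) • q x - q (n • x) = (n * (n - 1) / 2) • (q x - q (-x)))
    ∧ ((∀ (n : ℤ) (x : G), q (n • x) = (n ^ 2) • q x) ↔ ∀ x : G, q x - q (-x) = 0) := by
  have h0 : q 0 = 0 := by
    have h := hq 0 0 0
    simp only [add_zero, sub_self, zero_sub] at h
    have h2 : -q 0 + 0 = -q 0 + -q 0 := by rw [add_zero]; exact h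
    have h3 := add_left_cancel h2
    simpa using h3.symm
  have hb0 : ∀ y : G, q (0 + y) - q 0 - q y = 0 := by
    intro y; simp [h0]
  have hneg : ∀ x y : G, q (-x + y) - q (-x) - q y = -(q (x + y) - q x - q y) := by
    intro x y
    have h := hq x (-x) y
    rw [add_neg_cancel, hb0 y] at h
    exact (eq_neg_of_add_eq_zero_right h.symm)
  have hz : ∀ (x y : G) (n : ℤ), q (n • x + y) - q (n • x) - q y
      = n • (q (x + y) - q x - q y) := by
    intro x y n
    induction n using Int.induction_on with
    | zero => simpa using hb0 y
    | succ n ih =>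
        rw [add_one_zsmul, hq ((n : ℤ) • x) x y, ih, add_one_zsmul]
    | pred n ih =>
        rw [show (-(n : ℤ) - 1) • x = (-(n : ℤ)) • x + -x by
          rw [sub_zsmul, one_zsmul]]
        rw [hq ((-(n : ℤ)) • x) (-x) y, ih, hneg x y, sub_zsmul, one_zsmul]
  have hS : ∀ (x : G) (m : ℤ), q ((m + 1) • x)
      = q (m • x) + q x + m • (q (x + x) - q x - q x) := by
    intro x m
    have h := hz x x m
    rw [add_one_zsmul, ← h]
    abel
  have hdvd : ∀ n : ℤ, (2 : ℤ) ∣ n * (n - 1) := by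
    intro n
    rcases Int.even_or_odd n with he | ho
    · exact Dvd.dvd.mul_right he.two_dvd _
    · have : Even (n - 1) := by
        rcases ho with ⟨k, hk⟩; exact ⟨k, by omega⟩
      exact Dvd.dvd.mul_left this.two_dvd _
  have hkey : ∀ n : ℤ, (n + 1) * (n + 1 - 1) / 2 = n * (n - 1) / 2 + n := by
    intro n
    have h1 : (n + 1) * (n + 1 - 1) = n * (n - 1) + 2 * n := by ring
    have h2 := hdvd n
    omega
  have qn : ∀ (x : G) (n : ℤ), q (n • x)
      = n • q x + (n * (n - 1) / 2) • (q (x + x) - q x - q x) := by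
    intro x n
    induction n using Int.induction_on with
    | zero => simp [h0]
    | succ n ih =>
        rw [hS x (n : ℤ), ih, hkey (n : ℤ)]
        simp only [add_zsmul, one_zsmul]
        abel
    | pred n ih =>
        have h := hS x (-(n : ℤ) - 1)
        rw [show (-(n : ℤ) - 1 + 1) = -(n : ℤ) by ring, ih] at h
        have hk := hkey (-(n : ℤ) - 1)
        rw [show (-(n : ℤ) - 1 + 1) = -(n : ℤ) by ring] at hk
        have hx : q ((-(n : ℤ) - 1) • x)
            = (-(n : ℤ) • q x + (-(n : ℤ) * (-(n : ℤ) - 1) / 2) • (q (x + x) - q x - q x))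
              - q x - (-(n : ℤ) - 1) • (q (x + x) - q x - q x) := by
          rw [h]; abel
        rw [hx, hk]
        simp only [add_zsmul, sub_zsmul, one_zsmul]
        abel
  have main : ∀ (n : ℤ) (x : G), (n ^ 2) • q x - q (n • x)
      = (n * (n - 1) / 2) • (q x - q (-x)) := by
    intro n x
    have hmx : q (-x) = -q x + (q (x + x) - q x - q x) := by
      have h := qn x (-1)
      norm_num at h
      exact h
    have hc : (n * (n - 1) / 2) * 2 = n * (n - 1) := Int.ediv_mul_cancel (hdvd n)
    rw [qn x n, hmx]
    match_scalars
    · push_cast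
      ring_nf
      have h' : -n + n ^ 2 = n * (n - 1) := by ring
      omega
    · ring
  refine ⟨main, ?_, ?_⟩
  · intro h x
    have h1 := h (-1) x
    norm_num at h1
    rw [h1, sub_self]
  · intro h n x
    have h1 := main n x
    rw [h x, smul_zero, sub_eq_zero] at h1
    exact h1.symm
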